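/- Every minimal element of tf1 ⊗ tf2 has weight at most |tf1| + |tf2|, where the weight of a transfer flow (f, ℓ, ℓ') is ∑_{q,q'} f(q,q') (with # contributing nothing, as # + x = x). -/

import Mathlib

/-- ℕ extended with an extra element `#` (represented by `none`),
which is an identity for addition and incomparable with integers. -/
abbrev NS := Option ℕ

def NS.sharp : NS := none

def NS.add : NS → NS → NS
  | none, x => x
  | some a, none => some a
  | some a, some b => some (a + b)

instance : Add NS := ⟨NS.add⟩
instance : Zero NS := ⟨none⟩

instance : AddCommMonoid NS where
  add_assoc a b c := by
    show NS.add (NS.add a b) c = NS.add a (NS.add b c)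
    cases a <;> cases b <;> cases c <;> simp [NS.add, Nat.add_assoc]
  zero_add a := by cases a <;> rfl
  add_zero a := by cases a <;> rfl
  add_comm a b := by
    show NS.add a b = NS.add b a
    cases a <;> cases b <;> simp [NS.add, Nat.add_comm]
  nsmul := nsmulRec

/-- The order on `NS`: `#` is only comparable with `#`. -/
def NS.le : NS → NS → Prop
  | none, none => True
  | some a, some b => a ≤ b
  | _, _ => False

def NS.lt (x y : NS) : Prop := NS.le x y ∧ x ≠ y

/-- A transfer flow: an agent part `f` and a control part `(src, dst)`. -/
structure TF (Q L : Type) where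
  f : Q → Q → NS
  src : L
  dst : L

/-- The order `⪯` on transfer flows. -/
def TF.le {Q L : Type} (t1 t2 : TF Q L) : Prop :=
  t1.src = t2.src ∧ t1.dst = t2.dst ∧ ∀ q q', NS.le (t1.f q q') (t2.f q q')

/-- The product `tf1 ⊗ tf2` of two transfer flows. -/
def TF.prod {Q L : Type} [Fintype Q] (t1 t2 : TF Q L) : Set (TF Q L) :=
  { t | t1.dst = t2.src ∧ t.src = t1.src ∧ t.dst = t2.dst ∧
    ∃ H : Q → Q → Q → NS,
      (∀ q1 q3, (∑ q2, H q1 q2 q3) = t.f q1 q3) ∧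
      (∀ q1 q2, NS.le (t1.f q1 q2) (∑ q3, H q1 q2 q3)) ∧
      (∀ q2 q3, NS.le (t2.f q2 q3) (∑ q1, H q1 q2 q3)) }

/-- The weight of a transfer flow: `#` contributes nothing. -/
def TF.weight {Q L : Type} [Fintype Q] (t : TF Q L) : ℕ :=
  ∑ q, ∑ q', (t.f q q').getD 0

/-- Minimality with respect to `⪯` within a set of transfer flows. -/
def MinimalIn {Q L : Type} (S : Set (TF Q L)) (t : TF Q L) : Prop :=
  t ∈ S ∧ ∀ t' ∈ S, TF.le t' t → t' = t
-- aux
def NS.toNat : NS →+ ℕ where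
  toFun x := x.getD 0
  map_zero' := rfl
  map_add' a b := by
    show (NS.add a b).getD 0 = a.getD 0 + b.getD 0
    cases a <;> cases b <;> simp [NS.add]

lemma NS.getD_sum {ι : Type*} (s : Finset ι) (f : ι → NS) :
    (∑ i ∈ s, f i).getD 0 = ∑ i ∈ s, (f i).getD 0 :=
  map_sum NS.toNat f s

lemma NS.le_add' {a b c d : NS} (h1 : NS.le a b) (h2 : NS.le c d) :
    NS.le (a + c) (b + d) := by
  show NS.le (NS.add a c) (NS.add b d)
  cases a <;> cases b <;> cases c <;> cases d <;>
    simp_all [NS.le, NS.add] <;> omega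

lemma NS.le_sum {ι : Type*} (s : Finset ι) (f g : ι → NS)
    (h : ∀ i ∈ s, NS.le (f i) (g i)) :
    NS.le (∑ i ∈ s, f i) (∑ i ∈ s, g i) := by
  classical
  induction s using Finset.induction with
  | empty => simp; trivial
  | insert _ _ hx ih =>
    rw [Finset.sum_insert hx, Finset.sum_insert hx]
    exact NS.le_add' (h _ (Finset.mem_insert_self _ _))
      (ih fun i hi => h i (Finset.mem_insert_of_mem hi))

lemma NS.le_none {x y : NS} (h : NS.le x y) : x = none ↔ y = none := by
  cases x <;> cases y <;> simp_all [NS.le]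

lemma NS.le_of_some {x : NS} {v w : ℕ} (hx : x = some w) (hvw : v ≤ w) :
    NS.le (some v) x := by subst hx; exact hvw

open Finset in
lemma nat_core {Q : Type} [Fintype Q] (N : ℕ) :
    ∀ (a : Q → Q → Q → ℕ) (b1 b2 : Q → Q → ℕ),
    (∑ i, ∑ j, ∑ k, a i j k) ≤ N →
    (∀ i j, b1 i j ≤ ∑ k, a i j k) →
    (∀ j k, b2 j k ≤ ∑ i, a i j k) →
    ∃ a' : Q → Q → Q → ℕ,
      (∀ i j k, a' i j k ≤ a i j k) ∧
      (∀ i j, b1 i j ≤ ∑ k, a' i j k) ∧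
      (∀ j k, b2 j k ≤ ∑ i, a' i j k) ∧
      (∑ i, ∑ j, ∑ k, a' i j k) ≤ (∑ i, ∑ j, b1 i j) + (∑ j, ∑ k, b2 j k) := by
  classical
  induction N with
  | zero =>
    intro a b1 b2 hN h1 h2
    exact ⟨a, fun _ _ _ => le_rfl, h1, h2, le_trans hN (Nat.zero_le _)⟩
  | succ n ih =>
    intro a b1 b2 hN h1 h2
    by_cases hdec : ∃ i j k, 0 < a i j k ∧ b1 i j < ∑ k', a i j k' ∧
        b2 j k < ∑ i', a i' j k
    · obtain ⟨i, j, k, hpos, hr, hc⟩ := hdec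
      set a2 : Q → Q → Q → ℕ := fun i' j' k' =>
        if i' = i ∧ j' = j ∧ k' = k then a i j k - 1 else a i' j' k' with ha2
      have hle2 : ∀ i' j' k', a2 i' j' k' ≤ a i' j' k' := by
        intro i' j' k'
        simp only [ha2]
        split
        · next hh => obtain ⟨e1, e2, e3⟩ := hh; subst e1; subst e2; subst e3; omega
        · exact le_rfl
      have hsum1 : ∀ (f g : Q → ℕ) (x : Q), (∀ y, y ≠ x → f y = g y) →
          f x + 1 = g x → (∑ y, f y) + 1 = ∑ y, g y := by
        intro f g x heq hx
        rw [← Finset.add_sum_erase _ f (Finset.mem_univ x),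
            ← Finset.add_sum_erase _ g (Finset.mem_univ x)]
        have : ∑ y ∈ Finset.univ.erase x, f y = ∑ y ∈ Finset.univ.erase x, g y :=
          Finset.sum_congr rfl (fun y hy => heq y (Finset.ne_of_mem_erase hy))
        omega
      have ha2val : a2 i j k + 1 = a i j k := by
        have ht : i = i ∧ j = j ∧ k = k := ⟨rfl, rfl, rfl⟩
        simp only [ha2, if_pos ht]
        omega
      have ha2eq : ∀ i' j' k', ¬(i' = i ∧ j' = j ∧ k' = k) → a2 i' j' k' = a i' j' k' := by
        intro i' j' k' hne; simp only [ha2, if_neg hne]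
      have hrow : (∑ k', a2 i j k') + 1 = ∑ k', a i j k' :=
        hsum1 _ _ k (fun y hy => ha2eq i j y (by tauto)) ha2val
      have hroweq : ∀ i' j', ¬(i' = i ∧ j' = j) → (∑ k', a2 i' j' k') = ∑ k', a i' j' k' :=
        fun i' j' hne => Finset.sum_congr rfl (fun y _ => ha2eq i' j' y (by tauto))
      have hcol : (∑ i', a2 i' j k) + 1 = ∑ i', a i' j k :=
        hsum1 _ _ i (fun y hy => ha2eq y j k (by tauto)) ha2val
      have hcoleq : ∀ j' k', ¬(j' = j ∧ k' = k) → (∑ i', a2 i' j' k') = ∑ i', a i' j' k' :=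
        fun j' k' hne => Finset.sum_congr rfl (fun y _ => ha2eq y j' k' (by tauto))
      have hmid : (∑ j', ∑ k', a2 i j' k') + 1 = ∑ j', ∑ k', a i j' k' :=
        hsum1 _ _ j (fun y hy => hroweq i y (by tauto)) hrow
      have htot : (∑ i', ∑ j', ∑ k', a2 i' j' k') + 1 = ∑ i', ∑ j', ∑ k', a i' j' k' :=
        hsum1 _ _ i (fun y hy => Finset.sum_congr rfl
          (fun j' _ => hroweq y j' (by tauto))) hmid
      have hN2 : (∑ i', ∑ j', ∑ k', a2 i' j' k') ≤ n := by omega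
      have h1' : ∀ i' j', b1 i' j' ≤ ∑ k', a2 i' j' k' := by
        intro i' j'
        by_cases hc : i' = i ∧ j' = j
        · obtain ⟨e1, e2⟩ := hc; subst e1; subst e2; omega
        · rw [hroweq i' j' hc]; exact h1 i' j'
      have h2' : ∀ j' k', b2 j' k' ≤ ∑ i', a2 i' j' k' := by
        intro j' k'
        by_cases hc : j' = j ∧ k' = k
        · obtain ⟨e1, e2⟩ := hc; subst e1; subst e2; omega
        · rw [hcoleq j' k' hc]; exact h2 j' k'
      obtain ⟨a', hle', hb1', hb2', hw'⟩ := ih a2 b1 b2 hN2 h1' h2'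
      exact ⟨a', fun i' j' k' => le_trans (hle' i' j' k') (hle2 i' j' k'), hb1', hb2', hw'⟩
    · push_neg at hdec
      refine ⟨a, fun _ _ _ => le_rfl, h1, h2, ?_⟩
      have hpt : ∀ i j k, a i j k ≤
          (if (∑ k', a i j k') = b1 i j then a i j k else 0) +
          (if (∑ i', a i' j k) = b2 j k then a i j k else 0) := by
        intro i j k
        by_cases t1 : (∑ k', a i j k') = b1 i j
        · simp [t1]
        · by_cases t2 : (∑ i', a i' j k) = b2 j k
          · simp [t2]
          · have hb1 := h1 i j
            have hb2 := h2 j k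
            have : ¬ 0 < a i j k := by
              intro hpos
              exact t2 (le_antisymm (hdec i j k hpos (by omega)) hb2)
            simp [t1, t2]; omega
      calc (∑ i, ∑ j, ∑ k, a i j k)
          ≤ (∑ i, ∑ j, ∑ k, ((if (∑ k', a i j k') = b1 i j then a i j k else 0) +
              (if (∑ i', a i' j k) = b2 j k then a i j k else 0))) := by
            refine Finset.sum_le_sum fun i _ => Finset.sum_le_sum fun j _ =>
              Finset.sum_le_sum fun k _ => hpt i j k
        _ = (∑ i, ∑ j, ∑ k, (if (∑ k', a i j k') = b1 i j then a i j k else 0)) +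
            (∑ i, ∑ j, ∑ k, (if (∑ i', a i' j k) = b2 j k then a i j k else 0)) := by
            simp [Finset.sum_add_distrib]
        _ ≤ (∑ i, ∑ j, b1 i j) + (∑ j, ∑ k, b2 j k) := by
            have g1 : (∑ i, ∑ j, ∑ k, (if (∑ k', a i j k') = b1 i j then a i j k else 0))
                ≤ ∑ i, ∑ j, b1 i j := by
              refine Finset.sum_le_sum fun i _ => Finset.sum_le_sum fun j _ => ?_
              by_cases t : (∑ k', a i j k') = b1 i j
              · simp only [if_pos t]; exact le_of_eq t
              · simp [if_neg t]
            have g2 : (∑ i, ∑ j, ∑ k, (if (∑ i', a i' j k) = b2 j k then a i j k else 0))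
                ≤ ∑ j, ∑ k, b2 j k := by
              rw [Finset.sum_comm]
              rw [Finset.sum_congr rfl (fun j _ => Finset.sum_comm)]
              refine Finset.sum_le_sum fun j _ => Finset.sum_le_sum fun k _ => ?_
              by_cases t : (∑ i', a i' j k) = b2 j k
              · simp only [if_pos t]; exact le_of_eq t
              · simp [if_neg t]
            exact add_le_add g1 g2

lemma NS.le_getD {x y : NS} (h : NS.le x y) : x.getD 0 ≤ y.getD 0 := by
  cases x <;> cases y <;> simp_all [NS.le]


/-- Every minimal element of `tf1 ⊗ tf2` has weight at most
`weight tf1 + weight tf2`. -/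
theorem weight_of_minimal_prod {Q L : Type} [Fintype Q]
    (tf1 tf2 tf : TF Q L)
    (h : MinimalIn (TF.prod tf1 tf2) tf) :
    tf.weight ≤ tf1.weight + tf2.weight := by
  classical
  obtain ⟨⟨hd, hs, hdst, H, hH, hc1, hc2⟩, hmin⟩ := h
  set a : Q → Q → Q → ℕ := fun i j k => (H i j k).getD 0 with ha
  set b1 : Q → Q → ℕ := fun i j => (tf1.f i j).getD 0 with hb1def
  set b2 : Q → Q → ℕ := fun j k => (tf2.f j k).getD 0 with hb2def
  have hgd : ∀ i k, (∑ j, H i j k).getD 0 = ∑ j, a i j k := fun i k =>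
    NS.getD_sum Finset.univ (fun j => H i j k)
  have hb1 : ∀ i j, b1 i j ≤ ∑ k, a i j k := by
    intro i j
    calc b1 i j ≤ (∑ k, H i j k).getD 0 := NS.le_getD (hc1 i j)
      _ = ∑ k, a i j k := NS.getD_sum _ _
  have hb2 : ∀ j k, b2 j k ≤ ∑ i, a i j k := by
    intro j k
    calc b2 j k ≤ (∑ i, H i j k).getD 0 := NS.le_getD (hc2 j k)
      _ = ∑ i, a i j k := NS.getD_sum _ _
  obtain ⟨a', hle', hb1', hb2', hw'⟩ :=
    nat_core (∑ i, ∑ j, ∑ k, a i j k) a b1 b2 le_rfl hb1 hb2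
  set H' : Q → Q → Q → NS := fun i j k =>
    if H i j k = none then none else some (a' i j k) with hH'def
  have hHle : ∀ i j k, NS.le (H' i j k) (H i j k) := by
    intro i j k
    show NS.le (if H i j k = none then none else some (a' i j k)) (H i j k)
    cases hx : H i j k with
    | none => simp only [if_pos rfl]; trivial
    | some v =>
      rw [if_neg (by simp)]
      have hv : a i j k = v := by simp [ha, hx]
      show a' i j k ≤ v
      rw [← hv]; exact hle' i j k
  have hgetD' : ∀ i j k, (H' i j k).getD 0 = a' i j k := by
    intro i j k
    show (if H i j k = none then none else some (a' i j k)).getD 0 = a' i j k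
    cases hx : H i j k with
    | none =>
      simp only [if_pos rfl]
      have h0 : a i j k = 0 := by simp [ha, hx]
      have := hle' i j k
      show 0 = a' i j k
      omega
    | some v => rw [if_neg (by simp)]; rfl
  -- the candidate flow
  set tf' : TF Q L := ⟨fun i k => ∑ j, H' i j k, tf.src, tf.dst⟩ with htf'
  have hsumle : ∀ {ι : Type} [Fintype ι] (f g : ι → NS),
      (∀ x, NS.le (f x) (g x)) → NS.le (∑ x, f x) (∑ x, g x) :=
    fun f g hfg => NS.le_sum _ _ _ (fun x _ => hfg x)
  have hflowle : ∀ i k, NS.le (∑ j, H' i j k) (∑ j, H i j k) :=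
    fun i k => hsumle _ _ (fun j => hHle i j k)
  have hcg1 : ∀ i j, NS.le (∑ k, H' i j k) (∑ k, H i j k) :=
    fun i j => hsumle _ _ (fun k => hHle i j k)
  have hcg2 : ∀ j k, NS.le (∑ i, H' i j k) (∑ i, H i j k) :=
    fun j k => hsumle _ _ (fun i => hHle i j k)
  have hmem : tf' ∈ TF.prod tf1 tf2 := by
    refine ⟨hd, hs, hdst, H', fun i k => rfl, ?_, ?_⟩
    · intro i j
      cases hx : tf1.f i j with
      | none =>
        have h0 := hc1 i j; rw [hx] at h0
        have hn : (∑ k, H i j k) = none := ((NS.le_none h0).mp rfl)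
        have : (∑ k, H' i j k) = none := (NS.le_none (hcg1 i j)).mpr hn
        rw [this]; trivial
      | some v =>
        have h0 := hc1 i j; rw [hx] at h0
        have hn : (∑ k, H i j k) ≠ none := by
          intro hc; rw [hc] at h0; exact h0
        have hn' : (∑ k, H' i j k) ≠ none := by
          intro hc; exact hn ((NS.le_none (hcg1 i j)).mp hc)
        obtain ⟨w, hw⟩ := Option.ne_none_iff_exists'.mp hn'
        refine NS.le_of_some hw ?_
        have : w = ∑ k, a' i j k := by
          have := NS.getD_sum Finset.univ (fun k => H' i j k)
          rw [hw] at this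
          simpa [hgetD'] using this
        rw [this]
        have : b1 i j = v := by simp [hb1def, hx]
        rw [← this]; exact hb1' i j
    · intro j k
      cases hx : tf2.f j k with
      | none =>
        have h0 := hc2 j k; rw [hx] at h0
        have hn : (∑ i, H i j k) = none := ((NS.le_none h0).mp rfl)
        have : (∑ i, H' i j k) = none := (NS.le_none (hcg2 j k)).mpr hn
        rw [this]; trivial
      | some v =>
        have h0 := hc2 j k; rw [hx] at h0
        have hn : (∑ i, H i j k) ≠ none := by
          intro hc; rw [hc] at h0; exact h0
        have hn' : (∑ i, H' i j k) ≠ none := by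
          intro hc; exact hn ((NS.le_none (hcg2 j k)).mp hc)
        obtain ⟨w, hw⟩ := Option.ne_none_iff_exists'.mp hn'
        refine NS.le_of_some hw ?_
        have : w = ∑ i, a' i j k := by
          have := NS.getD_sum Finset.univ (fun i => H' i j k)
          rw [hw] at this
          simpa [hgetD'] using this
        rw [this]
        have : b2 j k = v := by simp [hb2def, hx]
        rw [← this]; exact hb2' j k
  have hle : TF.le tf' tf := by
    refine ⟨rfl, rfl, fun i k => ?_⟩
    show NS.le (∑ j, H' i j k) (tf.f i k)
    rw [← hH i k]
    exact hflowle i k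
  have heq : tf' = tf := hmin tf' hmem hle
  have hwq : tf.weight = ∑ i, ∑ j, ∑ k, a' i j k := by
    rw [← heq]
    show (∑ i, ∑ k, (∑ j, H' i j k).getD 0) = _
    have step : ∀ i k, (∑ j, H' i j k).getD 0 = ∑ j, a' i j k := by
      intro i k
      rw [NS.getD_sum]
      exact Finset.sum_congr rfl (fun j _ => hgetD' i j k)
    calc (∑ i, ∑ k, (∑ j, H' i j k).getD 0)
        = ∑ i, ∑ k, ∑ j, a' i j k :=
          Finset.sum_congr rfl fun i _ => Finset.sum_congr rfl fun k _ => step i k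
      _ = ∑ i, ∑ j, ∑ k, a' i j k := Finset.sum_congr rfl fun i _ => Finset.sum_comm
  have hw1 : tf1.weight = ∑ i, ∑ j, b1 i j := rfl
  have hw2 : tf2.weight = ∑ j, ∑ k, b2 j k := rfl
  rw [hwq, hw1, hw2]
  exact hw'
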